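/- For n ≥ 6, the semigroup of all transformations t of Q = {1,…,n} with 1 ∉ rng(t), nt = n, and (1t = n or it = n for all 2 ≤ i ≤ n−1), is generated by the following n+2 transformations: a₁ = (1→n)(2,3,…,n−1), a₂ = (1→n)(2,3), a₃ = (1→n)(n−1→2), b_i = (1→n)(i+1→n) for 1 ≤ i ≤ n−2, and c = [2, n, n, …, n] (mapping 1 to 2 and everything else to n). -/

import Mathlib

/-- Realize a transformation written in 1-based notation (a function `ℕ → ℕ` on
`{1,…,n}`) as an element of `Function.End (Fin n)` (state `i` ↦ index `i-1`). -/
def tr (n : ℕ) (f : ℕ → ℕ) : Function.End (Fin n) :=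
  fun q => if h : f (q.val + 1) - 1 < n then ⟨f (q.val + 1) - 1, h⟩ else q

/-- `a₁ = (1→n)(2,3,…,n-1)`. -/
def a1f (n : ℕ) : ℕ → ℕ := fun i =>
  if i = 1 then n else if i = n - 1 then 2 else if i < n - 1 then i + 1 else i

/-- `a₂ = (1→n)(2,3)`. -/
def a2f (n : ℕ) : ℕ → ℕ := fun i =>
  if i = 1 then n else if i = 2 then 3 else if i = 3 then 2 else i

/-- `a₃ = (1→n)(n-1→2)`. -/
def a3f (n : ℕ) : ℕ → ℕ := fun i =>
  if i = 1 then n else if i = n - 1 then 2 else i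

/-- `b_k = (1→n)(k+1→n)`. -/
def bkf (n k : ℕ) : ℕ → ℕ := fun i =>
  if i = 1 then n else if i = k + 1 then n else i

/-- `c = [2, n, n, …, n]`. -/
def cf (n : ℕ) : ℕ → ℕ := fun i => if i = 1 then 2 else n

/-- `t` belongs to `W^{≥6}_sf(n)`: states `{1,…,n}` are encoded as `Fin n` (state `i` ↦
index `i-1`); `1 ∉ rng t`, `n t = n`, and either `1 t = n`, or `i t = n` for all `i`
with `2 ≤ i ≤ n-1`. -/
def IsW6sf (n : ℕ) (t : Fin n → Fin n) : Prop :=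
  (∀ q : Fin n, (t q).val ≠ 0) ∧
  (∀ q : Fin n, q.val = n - 1 → t q = q) ∧
  ((∀ q : Fin n, q.val = 0 → (t q).val = n - 1) ∨
    (∀ i : Fin n, i.val ≠ 0 → i.val ≠ n - 1 → (t i).val = n - 1))

namespace S9
variable (k : ℕ)

lemma a1_apply (q : Fin (k+6)) : tr (k+6) (a1f (k+6)) q =
    if q.val = 0 then ⟨k+5, by omega⟩ else if q.val = k+4 then ⟨1, by omega⟩
    else if h : q.val < k+4 then ⟨q.val+1, by omega⟩ else q := by
  have hq := q.isLt
  simp only [tr, a1f, Fin.ext_iff, apply_ite Fin.val, apply_dite Fin.val]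
  split_ifs <;> (try simp [-Fin.val_eq_zero_iff]) <;> (try split_ifs) <;> omega

lemma a2_apply (q : Fin (k+6)) : tr (k+6) (a2f (k+6)) q =
    if q.val = 0 then ⟨k+5, by omega⟩ else if q.val = 1 then ⟨2, by omega⟩
    else if q.val = 2 then ⟨1, by omega⟩ else q := by
  have hq := q.isLt
  simp only [tr, a2f, Fin.ext_iff, apply_ite Fin.val, apply_dite Fin.val]
  split_ifs <;> (try simp [-Fin.val_eq_zero_iff]) <;> (try split_ifs) <;> omega

lemma a3_apply (q : Fin (k+6)) : tr (k+6) (a3f (k+6)) q =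
    if q.val = 0 then ⟨k+5, by omega⟩ else if q.val = k+4 then ⟨1, by omega⟩ else q := by
  have hq := q.isLt
  simp only [tr, a3f, Fin.ext_iff, apply_ite Fin.val, apply_dite Fin.val]
  split_ifs <;> (try simp [-Fin.val_eq_zero_iff]) <;> (try split_ifs) <;> omega

lemma b_apply (j : ℕ) (hj1 : 1 ≤ j) (hj2 : j ≤ k+4) (q : Fin (k+6)) :
    tr (k+6) (bkf (k+6) j) q = if q.val = 0 ∨ q.val = j then ⟨k+5, by omega⟩ else q := by
  have hq := q.isLt
  simp only [tr, bkf, Fin.ext_iff, apply_ite Fin.val, apply_dite Fin.val]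
  split_ifs <;> (try simp [-Fin.val_eq_zero_iff]) <;> (try split_ifs) <;> omega

lemma c_apply (q : Fin (k+6)) : tr (k+6) (cf (k+6)) q =
    if q.val = 0 then ⟨1, by omega⟩ else ⟨k+5, by omega⟩ := by
  have hq := q.isLt
  simp only [tr, cf, Fin.ext_iff, apply_ite Fin.val, apply_dite Fin.val]
  split_ifs <;> (try simp [-Fin.val_eq_zero_iff]) <;> (try split_ifs) <;> omega


/-- Lift a transformation of the middle states to `Fin (k+6)`. -/
def Lf (f : Function.End (Fin (k+4))) : Function.End (Fin (k+6)) :=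
  fun q => if h : 1 ≤ q.val ∧ q.val ≤ k+4 then
    ((f ⟨q.val - 1, by omega⟩).succ).castLE (by omega) else ⟨k+5, by omega⟩

lemma Lf_apply_val (f : Function.End (Fin (k+4))) (q : Fin (k+6)) :
    (Lf k f q).val = if h : 1 ≤ q.val ∧ q.val ≤ k+4 then
      (f ⟨q.val - 1, by omega⟩).val + 1 else k+5 := by
  simp only [Lf]; split_ifs <;> simp

lemma Lf_mul (f g : Function.End (Fin (k+4))) : Lf k (f * g) = Lf k f * Lf k g := by
  funext q
  show Lf k (f * g) q = Lf k f (Lf k g q)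
  apply Fin.ext
  rw [Lf_apply_val, Lf_apply_val]
  by_cases h : 1 ≤ q.val ∧ q.val ≤ k+4
  · rw [dif_pos h]
    have h2 : (Lf k g q).val = (g ⟨q.val - 1, by omega⟩).val + 1 := by
      rw [Lf_apply_val, dif_pos h]
    have h3 : 1 ≤ (Lf k g q).val ∧ (Lf k g q).val ≤ k+4 := by
      constructor
      · omega
      · have := (g (⟨q.val - 1, by omega⟩ : Fin (k+4))).isLt; omega
    rw [dif_pos h3]
    have h4 : (⟨(Lf k g q).val - 1, by omega⟩ : Fin (k+4)) = g ⟨q.val - 1, by omega⟩ := by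
      apply Fin.ext; simp [h2]
    rw [h4]
    rfl
  · rw [dif_neg h]
    have h2 : (Lf k g q).val = k+5 := by rw [Lf_apply_val, dif_neg h]
    rw [dif_neg (by omega)]

lemma Lf_rot : Lf k ⇑(finRotate (k+4)) = tr (k+6) (a1f (k+6)) := by
  funext q
  rw [a1_apply]
  apply Fin.ext
  erw [Lf_apply_val]
  have hq := q.isLt
  have hrot : ∀ p : Fin (k+4), ((finRotate (k+4)) p).val =
      if p.val = k+3 then 0 else p.val + 1 := by
    intro p
    have := coe_finRotate (n := k+3) p
    rw [this]
    by_cases hp : p = Fin.last (k+3)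
    · rw [if_pos hp, if_pos (by rw [hp]; rfl)]
    · rw [if_neg hp, if_neg (by intro h; apply hp; apply Fin.ext; exact h)]
  split_ifs <;> (try rw [hrot]) <;> (try split_ifs) <;> (try simp [-Fin.val_eq_zero_iff]) <;> (try simp_all [-Fin.val_eq_zero_iff]) <;> omega

lemma Lf_swap : Lf k ⇑(Equiv.swap (0 : Fin (k+4)) 1) = tr (k+6) (a2f (k+6)) := by
  funext q
  rw [a2_apply]
  apply Fin.ext
  erw [Lf_apply_val]
  have hq := q.isLt
  have hsw : ∀ p : Fin (k+4), ((Equiv.swap (0 : Fin (k+4)) 1) p).val =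
      if p.val = 0 then 1 else if p.val = 1 then 0 else p.val := by
    intro p
    rw [Equiv.swap_apply_def]
    have h0 : ((0:Fin (k+4))).val = 0 := rfl
    have h1 : ((1:Fin (k+4))).val = 1 := rfl
    split_ifs with e1 e2 e3 e4 e5 <;>
      simp_all [Fin.ext_iff, -Fin.val_eq_zero_iff] <;> omega
  split_ifs <;> (try rw [hsw]) <;> (try split_ifs) <;> (try simp [-Fin.val_eq_zero_iff]) <;> (try simp_all [-Fin.val_eq_zero_iff]) <;> omega

/-- The elementary collapse `(last → 0)` on the middle. -/
def eps0 : Function.End (Fin (k+4)) := fun p => if p.val = k+3 then 0 else p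

lemma Lf_eps0 : Lf k (eps0 k) = tr (k+6) (a3f (k+6)) := by
  funext q
  rw [a3_apply]
  apply Fin.ext
  rw [Lf_apply_val]
  have hq := q.isLt
  simp only [eps0]
  split_ifs <;> (try simp) <;> omega

def gens : Set (Function.End (Fin (k+6))) :=
  {tr (k+6) (a1f (k+6)), tr (k+6) (a2f (k+6)), tr (k+6) (a3f (k+6)), tr (k+6) (cf (k+6))} ∪
    (fun j => tr (k+6) (bkf (k+6) j)) '' {j : ℕ | 1 ≤ j ∧ j ≤ (k+6) - 2}

abbrev S : Subsemigroup (Function.End (Fin (k+6))) := Subsemigroup.closure (gens k)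

lemma a1_mem : tr (k+6) (a1f (k+6)) ∈ S k :=
  Subsemigroup.subset_closure (Set.mem_union_left _ (Set.mem_insert _ _))

lemma a2_mem : tr (k+6) (a2f (k+6)) ∈ S k :=
  Subsemigroup.subset_closure (Set.mem_union_left _
    (Set.mem_insert_of_mem _ (Set.mem_insert _ _)))

lemma a3_mem : tr (k+6) (a3f (k+6)) ∈ S k :=
  Subsemigroup.subset_closure (Set.mem_union_left _
    (Set.mem_insert_of_mem _ (Set.mem_insert_of_mem _ (Set.mem_insert _ _))))

lemma c_mem : tr (k+6) (cf (k+6)) ∈ S k :=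
  Subsemigroup.subset_closure (Set.mem_union_left _
    (Set.mem_insert_of_mem _ (Set.mem_insert_of_mem _ (Set.mem_insert_of_mem _ rfl))))

lemma b_mem (j : ℕ) (hj1 : 1 ≤ j) (hj2 : j ≤ k+4) : tr (k+6) (bkf (k+6) j) ∈ S k :=
  Subsemigroup.subset_closure (Set.mem_union_right _ ⟨j, ⟨hj1, by omega⟩, rfl⟩)

lemma one_apply (p : Fin (k+4)) : (1 : Function.End (Fin (k+4))) p = p := rfl

lemma e_mem : Lf k 1 ∈ S k := by
  have h : Lf k 1 = tr (k+6) (a2f (k+6)) * tr (k+6) (a2f (k+6)) := by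
    funext q
    show Lf k 1 q = tr (k+6) (a2f (k+6)) (tr (k+6) (a2f (k+6)) q)
    apply Fin.ext
    rw [Lf_apply_val, a2_apply, a2_apply]
    have hq := q.isLt
    split_ifs <;> simp_all [one_apply, -Fin.val_eq_zero_iff] <;> omega
  rw [h]
  exact mul_mem (a2_mem k) (a2_mem k)

lemma coe_pow_end (x : Equiv.Perm (Fin (k+4))) (j : ℕ) :
    ⇑(x ^ j) = (show Function.End (Fin (k+4)) from ⇑x) ^ j := by
  induction j with
  | zero => rfl
  | succ i ih => rw [pow_succ, pow_succ, Equiv.Perm.coe_mul, ih]; rfl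

lemma Lf_pow_mem (f : Function.End (Fin (k+4))) (hf : Lf k f ∈ S k) (j : ℕ) :
    Lf k (f ^ (j+1)) ∈ S k := by
  induction j with
  | zero => rw [pow_one]; exact hf
  | succ i ih => rw [pow_succ, Lf_mul]; exact mul_mem ih hf

lemma perm_mem (π : Equiv.Perm (Fin (k+4))) : Lf k ⇑π ∈ S k := by
  have hσ : (finRotate (k+4)).IsCycle := isCycle_finRotate_of_le (by omega)
  have hs : (finRotate (k+4)).support = Finset.univ := support_finRotate_of_le (by omega)
  have h := Equiv.Perm.closure_cycle_adjacent_swap hσ hs 0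
  have h0 : (finRotate (k+4)) 0 = 1 := finRotate_apply_zero
  rw [h0] at h
  have hmem : π ∈ Subgroup.closure {finRotate (k+4), Equiv.swap (0 : Fin (k+4)) 1} := by
    rw [h]; trivial
  induction hmem using Subgroup.closure_induction with
  | mem x hx =>
    rcases hx with hx | hx
    · rw [hx, Lf_rot]; exact a1_mem k
    · rw [Set.mem_singleton_iff] at hx; rw [hx, Lf_swap]; exact a2_mem k
  | one =>
    have : ⇑(1 : Equiv.Perm (Fin (k+4))) = (1 : Function.End (Fin (k+4))) := rfl
    rw [this]; exact e_mem k
  | mul x y hx hy ihx ihy =>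
    have : ⇑(x * y) = (show Function.End (Fin (k+4)) from ⇑x) * (show Function.End (Fin (k+4)) from ⇑y) := rfl
    rw [this, Lf_mul]; exact mul_mem ihx ihy
  | inv x hx ih =>
    have ho : 0 < orderOf x := orderOf_pos x
    rcases Nat.lt_or_ge (orderOf x) 2 with h1 | h2
    · have : orderOf x = 1 := by omega
      have hx1 : x = 1 := orderOf_eq_one_iff.mp this
      rw [hx1]
      have : ⇑((1 : Equiv.Perm (Fin (k+4)))⁻¹) = (1 : Function.End (Fin (k+4))) := rfl
      rw [this]; exact e_mem k
    · have hinv : x⁻¹ = x ^ (orderOf x - 1) := by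
        apply inv_eq_of_mul_eq_one_right
        calc x * x ^ (orderOf x - 1) = x ^ (orderOf x - 1 + 1) := (pow_succ' x _).symm
          _ = x ^ orderOf x := by rw [show orderOf x - 1 + 1 = orderOf x from by omega]
          _ = 1 := pow_orderOf_eq_one x
      rw [hinv, coe_pow_end, show orderOf x - 1 = (orderOf x - 2) + 1 from by omega]
      exact Lf_pow_mem k _ ih _
/-- The elementary collapse sending `x` to `y` and fixing everything else. -/
def epsxy (x y : Fin (k+4)) : Function.End (Fin (k+4)) := fun p => if p = x then y else p

lemma eps_mem (x y : Fin (k+4)) (hxy : x ≠ y) : Lf k (epsxy k x y) ∈ S k := by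
  set lm : Fin (k+4) := ⟨k+3, by omega⟩ with hlm
  have hlm0 : lm ≠ 0 := by
    intro h; have := congrArg Fin.val h; simp [hlm] at this
  set z : Fin (k+4) := Equiv.swap x lm y with hz
  have hzlm : z ≠ lm := by
    rw [hz, Equiv.swap_apply_def]
    split_ifs with h1 h2
    · exact fun _ => hxy h1.symm
    · intro h; exact hxy (h.trans h2.symm)
    · exact h2
  set π : Equiv.Perm (Fin (k+4)) := (Equiv.swap z 0) * (Equiv.swap x lm) with hπ
  have hπx : π x = lm := by
    rw [hπ, Equiv.Perm.mul_apply, Equiv.swap_apply_left]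
    exact Equiv.swap_apply_of_ne_of_ne (Ne.symm hzlm) hlm0
  have hπy : π y = 0 := by
    rw [hπ, Equiv.Perm.mul_apply, ← hz, Equiv.swap_apply_left]
  have heps0lm : eps0 k lm = 0 := by simp [eps0, hlm]
  have hdecomp : epsxy k x y =
      (show Function.End (Fin (k+4)) from ⇑π⁻¹) *
        (eps0 k * (show Function.End (Fin (k+4)) from ⇑π)) := by
    funext w
    show epsxy k x y w = π⁻¹ (eps0 k (π w))
    by_cases hw : w = x
    · subst hw
      rw [hπx, heps0lm, ← hπy, Equiv.Perm.inv_def, Equiv.symm_apply_apply]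
      simp [epsxy]
    · have h1 : π w ≠ lm := by
        intro h; exact hw (π.injective (h.trans hπx.symm))
      have h2 : eps0 k (π w) = π w := by
        simp only [eps0]
        rw [if_neg]
        intro h; exact h1 (Fin.ext h)
      rw [h2, Equiv.Perm.inv_def, Equiv.symm_apply_apply]
      simp [epsxy, hw]
  rw [hdecomp, Lf_mul, Lf_mul, Lf_eps0]
  exact mul_mem (perm_mem k π⁻¹) (mul_mem (a3_mem k) (perm_mem k π))

lemma Lf_all (f : Function.End (Fin (k+4))) : Lf k f ∈ S k := by
  have inj_case : ∀ g : Function.End (Fin (k+4)), Function.Injective g → Lf k g ∈ S k := by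
    intro g hinj
    have hbij : Function.Bijective g := ⟨hinj, Finite.surjective_of_injective hinj⟩
    have : ⇑(Equiv.ofBijective g hbij) = g := rfl
    rw [← this]
    exact perm_mem k _
  have H : ∀ d (f : Function.End (Fin (k+4))),
      (k+4) - (Finset.image f Finset.univ).card ≤ d → Lf k f ∈ S k := by
    intro d
    induction d with
    | zero =>
      intro f hf
      apply inj_case
      have hle := Finset.card_le_univ (Finset.image f Finset.univ)
      rw [Fintype.card_fin] at hle
      have hcard : (Finset.image f Finset.univ).card = k+4 := by omega
      have himg : Finset.image f Finset.univ = Finset.univ :=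
        Finset.eq_univ_of_card _ (by rw [hcard, Fintype.card_fin])
      apply Finite.injective_iff_surjective.mpr
      intro y
      have hy : y ∈ Finset.image f Finset.univ := by rw [himg]; exact Finset.mem_univ y
      obtain ⟨w, _, hw⟩ := Finset.mem_image.mp hy
      exact ⟨w, hw⟩
    | succ d ih =>
      intro f hf
      by_cases hinj : Function.Injective f
      · exact inj_case f hinj
      · obtain ⟨x₁, x₂, hfx, hne⟩ := Function.not_injective_iff.mp hinj
        have hnotsurj : ¬ Function.Surjective f := fun hs =>
          hinj (Finite.injective_iff_surjective.mpr hs)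
        obtain ⟨y, hy⟩ : ∃ y, y ∉ Finset.image f Finset.univ := by
          by_contra h
          push_neg at h
          apply hnotsurj
          intro w
          obtain ⟨v, _, hv⟩ := Finset.mem_image.mp (h w)
          exact ⟨v, hv⟩
        set f' : Function.End (Fin (k+4)) := Function.update f x₁ y with hf'
        have hfval : ∀ w, w ≠ x₁ → f' w = f w := fun w hw => Function.update_of_ne hw _ _
        have himg : Finset.image f' Finset.univ = insert y (Finset.image f Finset.univ) := by
          apply Finset.ext
          intro v
          show v ∈ Finset.image (fun x => f' x) Finset.univ ↔ v ∈ insert y (Finset.image (fun x => f x) Finset.univ)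
          simp only [Finset.mem_image, Finset.mem_insert, Finset.mem_univ, true_and]
          constructor
          · rintro ⟨w, hw⟩
            by_cases hwx : w = x₁
            · subst hwx; left; erw [← hw, hf', Function.update_self]
            · right; exact ⟨w, (hfval w hwx) ▸ hw⟩
          · rintro (rfl | ⟨w, hw⟩)
            · exact ⟨x₁, by erw [hf', Function.update_self]⟩
            · by_cases hwx : w = x₁
              · refine ⟨x₂, ?_⟩
                rw [hfval x₂ (Ne.symm hne), ← hfx, ← hwx]
                exact hw
              · exact ⟨w, (hfval w hwx) ▸ hw⟩
        have hcard : (Finset.image f' Finset.univ).card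
            = (Finset.image f Finset.univ).card + 1 := by
          rw [himg, Finset.card_insert_of_notMem hy]
        have hle : (k+4) - (Finset.image f' Finset.univ).card ≤ d := by omega
        have hyx : y ≠ f x₁ := by
          intro h
          exact hy (h ▸ Finset.mem_image.mpr ⟨x₁, Finset.mem_univ x₁, rfl⟩)
        have hdecomp : f = epsxy k y (f x₁) * f' := by
          funext w
          show f w = epsxy k y (f x₁) (f' w)
          by_cases hw : w = x₁
          · subst hw
            erw [hf', Function.update_self]
            simp [epsxy]
          · rw [hfval w hw]
            simp only [epsxy]
            rw [if_neg]
            intro h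
            exact hy (h ▸ Finset.mem_image.mpr ⟨w, Finset.mem_univ w, rfl⟩)
        rw [hdecomp, Lf_mul]
        exact mul_mem (eps_mem k y (f x₁) hyx) (ih f' hle)
  exact H _ f (Nat.sub_le _ _)

def lastN : Fin (k+6) := ⟨k+5, by omega⟩

def Inner (g : Function.End (Fin (k+6))) : Prop :=
  g 0 = lastN k ∧ g (lastN k) = lastN k ∧ ∀ q, (g q).val ≠ 0

lemma inner_base (g : Function.End (Fin (k+6))) (hg : Inner k g)
    (hmid : ∀ q : Fin (k+6), 1 ≤ q.val → q.val ≤ k+4 → g q ≠ lastN k) : g ∈ S k := by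
  have hval : ∀ p : Fin (k+4), (g ⟨p.val+1, by omega⟩).val - 1 < k+4 := by
    intro p
    have h1 := (g (⟨p.val+1, by omega⟩ : Fin (k+6))).isLt
    have h2 := hg.2.2 (⟨p.val+1, by omega⟩ : Fin (k+6))
    have h3 : (g (⟨p.val+1, by omega⟩ : Fin (k+6))).val ≠ k+5 := by
      intro h
      exact hmid ⟨p.val+1, by omega⟩ (by simp) (by have := p.isLt; simp; omega) (Fin.ext h)
    omega
  set f : Function.End (Fin (k+4)) :=
    (fun p => ⟨(g ⟨p.val+1, by omega⟩).val - 1, hval p⟩ : Fin (k+4) → Fin (k+4)) with hf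
  have hgf : g = Lf k f := by
    funext q
    apply Fin.ext
    rw [Lf_apply_val]
    have hq := q.isLt
    split_ifs with h
    · show (g q).val = (f ⟨q.val - 1, by omega⟩).val + 1
      have h1 : (f ⟨q.val - 1, by omega⟩).val
          = (g (⟨q.val - 1 + 1, by omega⟩ : Fin (k+6))).val - 1 := rfl
      have he : (⟨q.val - 1 + 1, by omega⟩ : Fin (k+6)) = q := Fin.ext (by simp; omega)
      rw [h1, he]
      have := hg.2.2 q
      omega
    · rcases (by omega : q.val = 0 ∨ q.val = k+5) with h0 | h5
      · have hq0 : q = 0 := Fin.ext (by simp [h0])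
        rw [hq0, hg.1]; rfl
      · have hq5 : q = lastN k := Fin.ext (by simpa [lastN] using h5)
        rw [hq5, hg.2.1]; rfl
  rw [hgf]
  exact Lf_all k f

lemma inner_mem (g : Function.End (Fin (k+6))) (hg : Inner k g) : g ∈ S k := by
  classical
  have H : ∀ d (g : Function.End (Fin (k+6))), Inner k g →
      (Finset.univ.filter
        (fun q : Fin (k+6) => 1 ≤ q.val ∧ q.val ≤ k+4 ∧ g q = lastN k)).card ≤ d →
      g ∈ S k := by
    intro d
    induction d with
    | zero =>
      intro g hg hc
      apply inner_base k g hg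
      intro q h1 h2 hq
      have hmem : q ∈ Finset.univ.filter
          (fun q : Fin (k+6) => 1 ≤ q.val ∧ q.val ≤ k+4 ∧ g q = lastN k) :=
        Finset.mem_filter.mpr ⟨Finset.mem_univ q, h1, h2, hq⟩
      have := Finset.card_pos.mpr ⟨q, hmem⟩
      omega
    | succ d ih =>
      intro g hg hc
      by_cases hemp : ∀ q : Fin (k+6), 1 ≤ q.val → q.val ≤ k+4 → g q ≠ lastN k
      · exact inner_base k g hg hemp
      · push_neg at hemp
        obtain ⟨x, hx1, hx2, hx3⟩ := hemp
        set g₁ : Function.End (Fin (k+6)) := Function.update g x ⟨1, by omega⟩ with hg₁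
        have hxnelast : x ≠ lastN k := by
          intro h; have := congrArg Fin.val h; simp [lastN] at this; omega
        have hup : ∀ w, w ≠ x → g₁ w = g w := fun w hw => Function.update_of_ne hw _ _
        have hg₁x : g₁ x = ⟨1, by omega⟩ := Function.update_self _ _ _
        have hInner₁ : Inner k g₁ := by
          refine ⟨?_, ?_, ?_⟩
          · rw [hup 0 (fun h => by rw [← h] at hx1; simp at hx1)]
            exact hg.1
          · rw [hup _ (fun h => hxnelast h.symm)]
            exact hg.2.1
          · intro q
            by_cases hq : q = x
            · rw [hq, hg₁x]; simp
            · rw [hup q hq]; exact hg.2.2 q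
        have hsub : (Finset.univ.filter
            (fun q : Fin (k+6) => 1 ≤ q.val ∧ q.val ≤ k+4 ∧ g₁ q = lastN k)) ⊆
            (Finset.univ.filter
            (fun q : Fin (k+6) => 1 ≤ q.val ∧ q.val ≤ k+4 ∧ g q = lastN k)).erase x := by
          intro q hqmem
          rw [Finset.mem_filter] at hqmem
          obtain ⟨-, hq1, hq2, hq3⟩ := hqmem
          have hqx : q ≠ x := by
            intro h
            rw [h, hg₁x] at hq3
            have := congrArg Fin.val hq3
            simp [lastN] at this
          exact Finset.mem_erase.mpr ⟨hqx, Finset.mem_filter.mpr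
            ⟨Finset.mem_univ q, hq1, hq2, by rw [← hup q hqx]; exact hq3⟩⟩
        have hxmem : x ∈ Finset.univ.filter
            (fun q : Fin (k+6) => 1 ≤ q.val ∧ q.val ≤ k+4 ∧ g q = lastN k) :=
          Finset.mem_filter.mpr ⟨Finset.mem_univ x, hx1, hx2, hx3⟩
        have hcard : (Finset.univ.filter
            (fun q : Fin (k+6) => 1 ≤ q.val ∧ q.val ≤ k+4 ∧ g₁ q = lastN k)).card ≤ d := by
          have h1 := Finset.card_le_card hsub
          have h2 := Finset.card_erase_of_mem hxmem
          have h3 := Finset.card_pos.mpr ⟨x, hxmem⟩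
          omega
        have hdecomp : g = g₁ * tr (k+6) (bkf (k+6) x.val) := by
          funext w
          show g w = g₁ (tr (k+6) (bkf (k+6) x.val) w)
          rw [b_apply k x.val hx1 hx2]
          split_ifs with h
          · rcases h with h0 | hx
            · have hw0 : w = 0 := Fin.ext (by simp [h0])
              rw [hw0, hg.1]
              exact hInner₁.2.1.symm
            · have hwx : w = x := Fin.ext hx
              rw [hwx, hx3]
              exact hInner₁.2.1.symm
          · have hwx : w ≠ x := fun hh => h (Or.inr (by rw [hh]))
            rw [hup w hwx]
        rw [hdecomp]
        exact mul_mem (ih g₁ hInner₁ (by convert hcard)) (b_mem k x.val hx1 hx2)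
  exact H _ g hg le_rfl

lemma W_a1 : IsW6sf (k+6) (tr (k+6) (a1f (k+6))) := by
  refine ⟨?_, ?_, Or.inl ?_⟩
  · intro q; rw [a1_apply]; have hq := q.isLt
    split_ifs <;> (try simp [-Fin.val_eq_zero_iff]) <;> omega
  · intro q hq5; rw [a1_apply]
    rw [if_neg (by omega), if_neg (by omega), dif_neg (by omega)]
  · intro q hq0; rw [a1_apply, if_pos hq0]; simp

lemma W_a2 : IsW6sf (k+6) (tr (k+6) (a2f (k+6))) := by
  refine ⟨?_, ?_, Or.inl ?_⟩
  · intro q; rw [a2_apply]; have hq := q.isLt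
    split_ifs <;> (try simp [-Fin.val_eq_zero_iff]) <;> omega
  · intro q hq5; rw [a2_apply]
    rw [if_neg (by omega), if_neg (by omega), if_neg (by omega)]
  · intro q hq0; rw [a2_apply, if_pos hq0]; simp

lemma W_a3 : IsW6sf (k+6) (tr (k+6) (a3f (k+6))) := by
  refine ⟨?_, ?_, Or.inl ?_⟩
  · intro q; rw [a3_apply]; have hq := q.isLt
    split_ifs <;> (try simp [-Fin.val_eq_zero_iff]) <;> omega
  · intro q hq5; rw [a3_apply]
    rw [if_neg (by omega), if_neg (by omega)]
  · intro q hq0; rw [a3_apply, if_pos hq0]; simp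

lemma W_b (j : ℕ) (hj1 : 1 ≤ j) (hj2 : j ≤ k+4) :
    IsW6sf (k+6) (tr (k+6) (bkf (k+6) j)) := by
  refine ⟨?_, ?_, Or.inl ?_⟩
  · intro q; rw [b_apply k j hj1 hj2]; have hq := q.isLt
    split_ifs <;> (try simp [-Fin.val_eq_zero_iff]) <;> omega
  · intro q hq5; rw [b_apply k j hj1 hj2]
    rw [if_neg (by omega)]
  · intro q hq0; rw [b_apply k j hj1 hj2, if_pos (Or.inl hq0)]; simp

lemma W_c : IsW6sf (k+6) (tr (k+6) (cf (k+6))) := by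
  refine ⟨?_, ?_, Or.inr ?_⟩
  · intro q; rw [c_apply]; have hq := q.isLt
    split_ifs <;> (try simp) <;> omega
  · intro q hq5; rw [c_apply, if_neg (by omega)]
    exact Fin.ext (by simp; omega)
  · intro q hq0 _; rw [c_apply, if_neg hq0]; simp

lemma W_mul (t s : Function.End (Fin (k+6)))
    (ht : IsW6sf (k+6) t) (hs : IsW6sf (k+6) s) : IsW6sf (k+6) (t * s) := by
  obtain ⟨hA, hB, hC⟩ := ht
  obtain ⟨hA', hB', hC'⟩ := hs
  refine ⟨fun q => hA (s q), fun q hq => ?_, ?_⟩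
  · show t (s q) = q
    rw [hB' q hq, hB q hq]
  · rcases hC' with h | h
    · left
      intro q hq
      show (t (s q)).val = (k+6) - 1
      have h1 := h q hq
      rw [hB (s q) h1]
      exact h1
    · right
      intro i h1 h2
      show (t (s i)).val = (k+6) - 1
      have h3 := h i h1 h2
      rw [hB (s i) h3]
      exact h3

lemma W_of_mem (t : Function.End (Fin (k+6))) (ht : t ∈ S k) : IsW6sf (k+6) t := by
  induction ht using Subsemigroup.closure_induction with
  | mem x hx =>
    rcases hx with hx | hx
    · simp only [Set.mem_insert_iff, Set.mem_singleton_iff] at hx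
      rcases hx with rfl | rfl | rfl | rfl
      · exact W_a1 k
      · exact W_a2 k
      · exact W_a3 k
      · exact W_c k
    · obtain ⟨j, ⟨hj1, hj2⟩, rfl⟩ := hx
      exact W_b k j hj1 (by omega)
  | mul x y hx hy ihx ihy => exact W_mul k x y ihx ihy

end S9


/-- For `n ≥ 6`, the semigroup `W^{≥6}_sf(n)` is generated by the `n+2`
transformations `a₁, a₂, a₃, b₁, …, b_{n-2}, c`. -/
theorem statement9 (n : ℕ) (hn : 6 ≤ n) :
    ∀ t : Function.End (Fin n),
      t ∈ Subsemigroup.closure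
        ({tr n (a1f n), tr n (a2f n), tr n (a3f n), tr n (cf n)} ∪
          (fun k => tr n (bkf n k)) '' {k : ℕ | 1 ≤ k ∧ k ≤ n - 2}) ↔
      IsW6sf n t := by
  obtain ⟨k, rfl⟩ : ∃ k, n = k + 6 := ⟨n - 6, by omega⟩
  intro t
  constructor
  · intro ht
    exact S9.W_of_mem k t ht
  · rintro ⟨hA, hB, hC⟩
    rcases hC with hC1 | hC2
    · refine S9.inner_mem k t ⟨?_, ?_, hA⟩
      · apply Fin.ext
        have h := hC1 0 (by simp)
        simp [S9.lastN]
        omega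
      · exact hB (S9.lastN k) rfl
    · set g : Function.End (Fin (k+6)) :=
        fun q => if 1 ≤ q.val ∧ q.val ≤ k+4 then t 0 else S9.lastN k with hg
      have happ : ∀ q : Fin (k+6),
          g q = if 1 ≤ q.val ∧ q.val ≤ k+4 then t 0 else S9.lastN k := fun q => rfl
      have hInnerG : S9.Inner k g := by
        refine ⟨?_, ?_, ?_⟩
        · rw [happ 0, if_neg (by simp)]
        · rw [happ _, if_neg (by simp [S9.lastN])]
        · intro q
          rw [happ q]
          split_ifs
          · exact hA 0
          · simp [S9.lastN]
      have hdecomp : t = g * tr (k+6) (cf (k+6)) := by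
        funext w
        show t w = g (tr (k+6) (cf (k+6)) w)
        rw [S9.c_apply]
        have hw := w.isLt
        split_ifs with h0
        · have hw0 : w = 0 := Fin.ext (by simp [h0])
          rw [happ _, if_pos (by constructor <;> simp), hw0]
        · rw [happ _, if_neg (by simp)]
          by_cases h5 : w.val = k+5
          · rw [hB w (by omega)]
            exact Fin.ext (by simp [S9.lastN, h5])
          · have h6 := hC2 w (by omega) (by omega)
            exact Fin.ext (by simp [S9.lastN]; omega)
      rw [hdecomp]
      exact mul_mem (S9.inner_mem k g hInnerG) (S9.c_mem k)
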